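/- In the lower-bound phase construction with parameter j < k, the offline optimal algorithm incurs at most 2 evictions per phase. -/
import Mathlib


/-- In the lower-bound phase construction with parameter j < k
(pages coded 1,…,k for P₁,…,P_k and 0 for Q₀; step (1) requests P₁,…,P_k in
order k times, step (2) requests Q₀, step (3) makes j further requests among
these k+1 pages), the offline optimal incurs at most 2 evictions per phase:
there is a valid schedule on a size-k cache, starting from the cache
{Q₀, P₁, …, P_{k−1}}, that misses at most twice during the phase. -/
theorem opt_at_most_two_per_phase
    (k j : ℕ) (hk : 2 ≤ k) (hj : j < k)
    (r : ℕ → ℕ)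
    (hstep1 : ∀ t < k * k, r t = t % k + 1)
    (hstep2 : r (k * k) = 0)
    (hstep3 : ∀ t, k * k < t → t < k * k + 1 + j → r t ≤ k) :
    ∃ C : ℕ → Finset ℕ,
      C 0 = insert 0 (Finset.image (· + 1) (Finset.range (k - 1))) ∧
      (∀ t, (C t).card ≤ k) ∧
      (∀ t < k * k + 1 + j, r t ∈ C (t + 1) ∧ C (t + 1) ⊆ insert (r t) (C t)) ∧
      ((Finset.range (k * k + 1 + j)).filter (fun t => r t ∉ C t)).card ≤ 2 := by
  have hkk : k ≤ k * k := Nat.le_mul_of_pos_left k (by omega)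
  set A : Finset ℕ := insert 0 (Finset.image (· + 1) (Finset.range (k - 1))) with hA
  set B : Finset ℕ := Finset.image (· + 1) (Finset.range k) with hB
  have hAmem : ∀ x, x ∈ A ↔ x < k := by
    intro x
    simp only [hA, Finset.mem_insert, Finset.mem_image, Finset.mem_range]
    constructor
    · rintro (rfl | ⟨a, ha, rfl⟩) <;> omega
    · intro hx
      rcases Nat.eq_zero_or_pos x with rfl | hpos
      · left; rfl
      · right; exact ⟨x - 1, by omega, by omega⟩
  have hBmem : ∀ x, x ∈ B ↔ 1 ≤ x ∧ x ≤ k := by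
    intro x
    simp only [hB, Finset.mem_image, Finset.mem_range]
    constructor
    · rintro ⟨a, ha, rfl⟩; omega
    · intro hx; exact ⟨x - 1, by omega, by omega⟩
  have hBcard : B.card = k := by
    rw [hB, Finset.card_image_of_injective _ (add_left_injective 1), Finset.card_range]
  have hAcard : A.card ≤ k := by
    refine le_trans (Finset.card_insert_le _ _) ?_
    have := Finset.card_image_le (s := Finset.range (k - 1)) (f := (· + 1))
    simp only [Finset.card_range] at this
    omega
  -- choose a page p ∈ B never requested in step 3
  obtain ⟨p, hpB, hpS⟩ :
      ∃ p ∈ B, p ∉ Finset.image r (Finset.Ioo (k * k) (k * k + 1 + j)) := by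
    by_contra h
    push_neg at h
    have hsub : B ⊆ Finset.image r (Finset.Ioo (k * k) (k * k + 1 + j)) :=
      fun x hx => h x hx
    have h1 : (Finset.image r (Finset.Ioo (k * k) (k * k + 1 + j))).card ≤ j := by
      refine le_trans Finset.card_image_le ?_
      rw [Nat.card_Ioo]; omega
    have := Finset.card_le_card hsub
    omega
  set D : Finset ℕ := insert 0 (B.erase p) with hD
  have hDcard : D.card ≤ k := by
    refine le_trans (Finset.card_insert_le _ _) ?_
    rw [Finset.card_erase_of_mem hpB, hBcard]; omega
  have hDmem0 : (0 : ℕ) ∈ D := Finset.mem_insert_self _ _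
  have hDmem : ∀ x, 1 ≤ x → x ≤ k → x ≠ p → x ∈ D := by
    intro x h1 h2 hne
    exact Finset.mem_insert_of_mem (Finset.mem_erase.mpr ⟨hne, (hBmem x).mpr ⟨h1, h2⟩⟩)
  refine ⟨fun t => if t < k then A else if t ≤ k * k then B else D, ?_, ?_, ?_, ?_⟩
  · simp only [if_pos (show 0 < k by omega)]
  · intro t
    dsimp only
    split_ifs <;> [exact hAcard; exact hBcard.le; exact hDcard]
  · intro t ht
    dsimp only
    by_cases h1 : t < k - 1
    · have hrt : r t = t + 1 := by
        rw [hstep1 t (by omega), Nat.mod_eq_of_lt (by omega)]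
      rw [if_pos (show t < k by omega), if_pos (show t + 1 < k by omega), hrt]
      exact ⟨(hAmem _).mpr (by omega), Finset.subset_insert _ _⟩
    · by_cases h2 : t = k - 1
      · subst h2
        have hrt : r (k - 1) = k := by
          rw [hstep1 _ (by omega), Nat.mod_eq_of_lt (by omega)]; omega
        rw [if_pos (show k - 1 < k by omega), if_neg (show ¬ k - 1 + 1 < k by omega),
          if_pos (show k - 1 + 1 ≤ k * k by omega), hrt]
        refine ⟨(hBmem _).mpr ⟨by omega, le_rfl⟩, ?_⟩
        intro x hx
        rcases (hBmem x).mp hx with ⟨hx1, hx2⟩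
        rcases eq_or_lt_of_le hx2 with rfl | hlt
        · exact Finset.mem_insert_self _ _
        · exact Finset.mem_insert_of_mem ((hAmem x).mpr hlt)
      · by_cases h3 : t < k * k
        · have hrt : r t = t % k + 1 := hstep1 t h3
          rw [if_neg (show ¬ t < k by omega), if_pos (show t ≤ k * k by omega),
            if_neg (show ¬ t + 1 < k by omega), if_pos (show t + 1 ≤ k * k by omega), hrt]
          refine ⟨(hBmem _).mpr ⟨by omega, ?_⟩, Finset.subset_insert _ _⟩
          have := Nat.mod_lt t (show 0 < k by omega)
          omega
        · by_cases h4 : t = k * k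
          · subst h4
            rw [if_neg (show ¬ k * k < k by omega), if_pos le_rfl,
              if_neg (show ¬ k * k + 1 < k by omega),
              if_neg (show ¬ k * k + 1 ≤ k * k by omega), hstep2]
            exact ⟨hDmem0, Finset.insert_subset_insert _ (Finset.erase_subset _ _)⟩
          · have ht1 : k * k < t := by omega
            rw [if_neg (show ¬ t < k by omega), if_neg (show ¬ t ≤ k * k by omega),
              if_neg (show ¬ t + 1 < k by omega), if_neg (show ¬ t + 1 ≤ k * k by omega)]
            have hle : r t ≤ k := hstep3 t ht1 ht
            have hne : r t ≠ p := by
              intro he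
              exact hpS (Finset.mem_image.mpr ⟨t, Finset.mem_Ioo.mpr ⟨ht1, ht⟩, he⟩)
            refine ⟨?_, Finset.subset_insert _ _⟩
            rcases Nat.eq_zero_or_pos (r t) with h0 | h0
            · rw [h0]; exact hDmem0
            · exact hDmem _ h0 hle hne
  · refine le_trans (Finset.card_le_card (t := ({k - 1, k * k} : Finset ℕ)) ?_) ?_
    · intro t ht
      simp only [Finset.mem_filter, Finset.mem_range] at ht
      obtain ⟨ht, hmiss⟩ := ht
      simp only [Finset.mem_insert, Finset.mem_singleton]
      by_contra hcon
      push_neg at hcon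
      obtain ⟨hne1, hne2⟩ := hcon
      apply hmiss
      by_cases h1 : t < k
      · rw [if_pos h1, hstep1 t (by omega), Nat.mod_eq_of_lt h1]
        exact (hAmem _).mpr (by omega)
      · by_cases h3 : t ≤ k * k
        · rw [if_neg h1, if_pos h3]
          have h3' : t < k * k := by omega
          rw [hstep1 t h3']
          have := Nat.mod_lt t (show 0 < k by omega)
          exact (hBmem _).mpr ⟨by omega, by omega⟩
        · rw [if_neg h1, if_neg h3]
          have ht1 : k * k < t := by omega
          have hle : r t ≤ k := hstep3 t ht1 ht
          have hne : r t ≠ p := by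
            intro he
            exact hpS (Finset.mem_image.mpr ⟨t, Finset.mem_Ioo.mpr ⟨ht1, ht⟩, he⟩)
          rcases Nat.eq_zero_or_pos (r t) with h0 | h0
          · rw [h0]; exact hDmem0
          · exact hDmem _ h0 hle hne
    · refine le_trans (Finset.card_insert_le _ _) ?_
      simp
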